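/- For all integers m ≥ 1 and p ≥ 0, the rational number (m/(3p+m))·C(3p+m, p) is a nonnegative integer, i.e. (3p+m) divides m·C(3p+m, p). -/

import Mathlib

/-- For `m ≥ 1` and `p ≥ 0`, `(3p+m)` divides `m·C(3p+m,p)`; the quotient
`(m/(3p+m))·C(3p+m,p)` is the number of forests of `m` complete ternary trees
with `p` internal vertices in total. -/
theorem fuss_catalan_ternary_integrality (m p : ℕ) (hm : 1 ≤ m) :
    (3 * p + m) ∣ m * Nat.choose (3 * p + m) p := by
  rcases Nat.eq_zero_or_pos p with hp | hp
  · subst hp; simp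
  set n := 3 * p + m with hn
  have hn1 : 1 ≤ n := by omega
  have hpn : p ≤ n := by omega
  have A : Nat.choose (n - 1) p * n = Nat.choose n p * (n - p) := by
    have h := Nat.choose_mul_succ_eq (n - 1) p
    rwa [Nat.sub_add_cancel hn1] at h
  have B : n * Nat.choose (n - 1) (p - 1) = Nat.choose n p * p := by
    have h := Nat.add_one_mul_choose_eq (n - 1) (p - 1)
    rwa [Nat.sub_add_cancel hn1,
      Nat.sub_add_cancel hp] at h
  rw [← Int.natCast_dvd_natCast]
  push_cast
  have A' : ((Nat.choose (n - 1) p : ℤ)) * n = Nat.choose n p * ((n : ℤ) - p) := by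
    have := congrArg (Nat.cast : ℕ → ℤ) A
    push_cast [hpn] at this
    linarith
  have B' : (n : ℤ) * Nat.choose (n - 1) (p - 1) = Nat.choose n p * p := by
    exact_mod_cast congrArg (Nat.cast : ℕ → ℤ) B
  have key : (m : ℤ) * Nat.choose n p =
      (n : ℤ) * (Nat.choose (n - 1) p - 2 * Nat.choose (n - 1) (p - 1)) := by
    have hnm : (n : ℤ) = 3 * p + m := by exact_mod_cast hn
    nlinarith [A', B']
  exact ⟨_, key⟩
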